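/- Let D = (D₁, D₂, D₃) be a graphic tripartite 3-uniform hypergraph degree sequence on n₁ + n₂ + n₃ vertices such that for each k = 1, 2, 3, the sequence Dₖ consists of some number of entries equal to d_{k,max}, one entry dₖ with d_{k,min} ≤ dₖ ≤ d_{k,max}, and the remaining entries equal to d_{k,min}. Let D' = (D₁', D₂', D₃') be a tripartite degree sequence on n₁ + n₂ + n₃ vertices such that for each k = 1, 2, 3, every entry of Dₖ' lies between d_{k,min} and d_{k,max} and the sum of the entries of Dₖ' equals the sum of the entries of Dₖ. Then D' is also a graphic tripartite 3-uniform hypergraph degree sequence. -/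

import Mathlib

set_option maxHeartbeats 1000000


/-- A tripartite 3-uniform hypergraph degree sequence `(D₁, D₂, D₃)` is graphic: there exists a
tripartite 3-uniform hypergraph, given by its set of hyperedges `E ⊆ A × B × C` (each hyperedge
has exactly one vertex in each class, no repeated hyperedges), whose degrees on the three
vertex classes are exactly `D₁`, `D₂`, `D₃`. -/
def TripartiteGraphic {n₁ n₂ n₃ : ℕ} (D₁ : Fin n₁ → ℕ) (D₂ : Fin n₂ → ℕ)
    (D₃ : Fin n₃ → ℕ) : Prop :=
  ∃ E : Finset (Fin n₁ × Fin n₂ × Fin n₃),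
    (∀ a, (E.filter fun e => e.1 = a).card = D₁ a) ∧
    (∀ b, (E.filter fun e => e.2.1 = b).card = D₂ b) ∧
    (∀ c, (E.filter fun e => e.2.2 = c).card = D₃ c)

/-- Let `(D₁, D₂, D₃)` be a graphic tripartite 3-uniform hypergraph degree sequence on
`n₁ + n₂ + n₃` vertices where each `Dₖ = (dₖmax, …, dₖmax, dₖ, dₖmin, …, dₖmin)` (with `aₖ`
maximal entries, one entry `dₖ` with `dₖmin ≤ dₖ ≤ dₖmax`, and the rest minimal).
If `(D₁', D₂', D₃')` is a tripartite degree sequence on `n₁ + n₂ + n₃` vertices with all entries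
of `Dₖ'` between `dₖmin` and `dₖmax` and the same class degree sums as `(D₁, D₂, D₃)`, then
`(D₁', D₂', D₃')` is also graphic. -/
lemma TG.cycle {n₁ n₂ n₃ : ℕ} {D₁ : Fin n₁ → ℕ} {D₂ : Fin n₂ → ℕ} {D₃ : Fin n₃ → ℕ}
    (h : TripartiteGraphic D₁ D₂ D₃) : TripartiteGraphic D₂ D₃ D₁ := by
  obtain ⟨E, h1, h2, h3⟩ := h
  refine ⟨E.map ⟨fun e => (e.2.1, e.2.2, e.1), ?_⟩, ?_, ?_, ?_⟩
  · intro e f hef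
    simp only [Prod.mk.injEq] at hef
    exact Prod.ext hef.2.2 (Prod.ext hef.1 hef.2.1)
  · intro b; rw [Finset.filter_map, Finset.card_map]; exact h2 b
  · intro c; rw [Finset.filter_map, Finset.card_map]; exact h3 c
  · intro a; rw [Finset.filter_map, Finset.card_map]; exact h1 a

lemma TG.perm {n₁ n₂ n₃ : ℕ} {D₁ : Fin n₁ → ℕ} {D₂ : Fin n₂ → ℕ} {D₃ : Fin n₃ → ℕ}
    (h : TripartiteGraphic D₁ D₂ D₃) (σ : Equiv.Perm (Fin n₁)) :
    TripartiteGraphic (D₁ ∘ σ) D₂ D₃ := by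
  obtain ⟨E, h1, h2, h3⟩ := h
  refine ⟨E.map ⟨fun e => (σ.symm e.1, e.2.1, e.2.2), ?_⟩, ?_, ?_, ?_⟩
  · intro e f hef
    simp only [Prod.mk.injEq] at hef
    exact Prod.ext (σ.symm.injective hef.1) (Prod.ext hef.2.1 hef.2.2)
  · intro a
    simp only [Finset.filter_map, Finset.card_map, Function.comp_def,
      Function.Embedding.coeFn_mk, Equiv.symm_apply_eq]
    convert h1 (σ a) using 2
    ext e
    simp [Equiv.symm_apply_eq]
  · intro b; rw [Finset.filter_map, Finset.card_map]; exact h2 b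
  · intro c; rw [Finset.filter_map, Finset.card_map]; exact h3 c

lemma TG.card_exchange {α : Type*} [DecidableEq α] (E : Finset α) (u v : α)
    (hu : u ∈ E) (hv : v ∉ E) (P : α → Prop) [DecidablePred P] :
    (((insert v (E.erase u)).filter P).card + (if P u then 1 else 0)) =
      ((E.filter P).card + (if P v then 1 else 0)) := by
  rw [Finset.filter_insert, Finset.filter_erase]
  by_cases hPu : P u <;> by_cases hPv : P v <;> simp only [hPu, hPv, if_true, if_false]
  · rw [Finset.card_insert_of_notMem
        (fun h => hv (Finset.mem_filter.1 (Finset.mem_erase.1 h).2).1),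
      Finset.card_erase_of_mem (Finset.mem_filter.2 ⟨hu, hPu⟩)]
    have : 1 ≤ (E.filter P).card := Finset.card_pos.2 ⟨u, Finset.mem_filter.2 ⟨hu, hPu⟩⟩
    omega
  · rw [Finset.card_erase_of_mem (Finset.mem_filter.2 ⟨hu, hPu⟩)]
    have : 1 ≤ (E.filter P).card := Finset.card_pos.2 ⟨u, Finset.mem_filter.2 ⟨hu, hPu⟩⟩
    omega
  · rw [Finset.erase_eq_of_notMem (fun h => hPu (Finset.mem_filter.1 h).2),
      Finset.card_insert_of_notMem (fun h => hv (Finset.mem_filter.1 h).1)]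
  · rw [Finset.erase_eq_of_notMem (fun h => hPu (Finset.mem_filter.1 h).2)]

lemma TG.transfer {n₁ n₂ n₃ : ℕ} {C : Fin n₁ → ℕ} {D₂ : Fin n₂ → ℕ} {D₃ : Fin n₃ → ℕ}
    (h : TripartiteGraphic C D₂ D₃) (i j : Fin n₁) (hij : C j < C i)
    (C' : Fin n₁ → ℕ) (h1 : C' i = C i - 1) (h2 : C' j = C j + 1)
    (h3 : ∀ a, a ≠ i → a ≠ j → C' a = C a) :
    TripartiteGraphic C' D₂ D₃ := by
  obtain ⟨E, hE1, hE2, hE3⟩ := h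
  have hne : i ≠ j := fun h => by rw [h] at hij; exact lt_irrefl _ hij
  -- find a pair p in N(i) \ N(j)
  set Si := (E.filter fun e => e.1 = i).image (fun e => e.2) with hSi
  set Sj := (E.filter fun e => e.1 = j).image (fun e => e.2) with hSj
  have hinj : ∀ (v : Fin n₁), Set.InjOn (fun e : Fin n₁ × Fin n₂ × Fin n₃ => e.2)
      ↑(E.filter fun e => e.1 = v) := by
    intro v e he f hf hef
    simp only [Finset.coe_filter, Set.mem_setOf_eq] at he hf
    exact Prod.ext (he.2.trans hf.2.symm) hef
  have hcardi : Si.card = C i := by rw [hSi, Finset.card_image_of_injOn (hinj i), hE1 i]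
  have hcardj : Sj.card = C j := by rw [hSj, Finset.card_image_of_injOn (hinj j), hE1 j]
  have hlt : Sj.card < Si.card := by rw [hcardi, hcardj]; exact hij
  have hex : ∃ p ∈ Si, p ∉ Sj := by
    by_contra hc
    push_neg at hc
    exact absurd (Finset.card_le_card fun p hp => hc p hp) (not_le.2 hlt)
  obtain ⟨p, hpi, hpj⟩ := hex
  obtain ⟨e, he, hep⟩ := Finset.mem_image.1 hpi
  have heE : e ∈ E := (Finset.mem_filter.1 he).1
  have he1 : e.1 = i := (Finset.mem_filter.1 he).2
  have heu : e = (i, p.1, p.2) := by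
    rw [← he1, ← hep]
  have huE : (i, p.1, p.2) ∈ E := heu ▸ heE
  have hvE : (j, p.1, p.2) ∉ E := by
    intro hmem
    exact hpj (Finset.mem_image.2 ⟨(j, p.1, p.2), Finset.mem_filter.2 ⟨hmem, rfl⟩, rfl⟩)
  refine ⟨insert (j, p.1, p.2) (E.erase (i, p.1, p.2)), ?_, ?_, ?_⟩
  · intro a
    have := TG.card_exchange E (i, p.1, p.2) (j, p.1, p.2) huE hvE (fun e => e.1 = a)
    by_cases hai : a = i
    · rw [if_pos (hai ▸ rfl), if_neg (fun h : (j, p.1, p.2).1 = a => hne ((hai ▸ h : j = i)).symm)] at this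
      have h1' : C' a = C a - 1 := by rw [hai]; exact h1
      rw [h1', ← hE1 a]
      have hpos : 1 ≤ (E.filter fun e => e.1 = a).card := by
        rw [hE1 a, hai]; omega
      omega
    · by_cases haj : a = j
      · rw [if_neg (fun h : (i, p.1, p.2).1 = a => hai ((h : i = a)).symm), if_pos (haj ▸ rfl)] at this
        have h2' : C' a = C a + 1 := by rw [haj]; exact h2
        rw [h2', ← hE1 a]
        omega
      · rw [if_neg (fun h : (i, p.1, p.2).1 = a => hai ((h : i = a)).symm),
          if_neg (fun h : (j, p.1, p.2).1 = a => haj ((h : j = a)).symm)] at this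
        rw [h3 a hai haj, ← hE1 a]
        omega
  · intro b
    have := TG.card_exchange E (i, p.1, p.2) (j, p.1, p.2) huE hvE (fun e => e.2.1 = b)
    simp only at this
    rw [← hE2 b]
    omega
  · intro c
    have := TG.card_exchange E (i, p.1, p.2) (j, p.1, p.2) huE hvE (fun e => e.2.2 = c)
    simp only at this
    rw [← hE3 c]
    omega

/-- prefix sum of the first `k` entries -/
def TG.pref {n : ℕ} (X : Fin n → ℕ) (k : ℕ) : ℕ :=
  ∑ t : Fin n, if (t : ℕ) < k then X t else 0

lemma TG.pref_mono_arg {n : ℕ} {X Y : Fin n → ℕ} (k : ℕ)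
    (h : ∀ t : Fin n, (t : ℕ) < k → X t ≤ Y t) : TG.pref X k ≤ TG.pref Y k := by
  refine Finset.sum_le_sum fun t _ => ?_
  by_cases ht : (t : ℕ) < k
  · simpa [ht] using h t ht
  · simp [ht]

lemma TG.pref_add_suff {n : ℕ} (X : Fin n → ℕ) (k : ℕ) :
    TG.pref X k + (∑ t : Fin n, if (t : ℕ) < k then 0 else X t) = ∑ t, X t := by
  rw [TG.pref, ← Finset.sum_add_distrib]
  refine Finset.sum_congr rfl fun t _ => ?_
  by_cases ht : (t : ℕ) < k <;> simp [ht]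

lemma TG.pref_succ {n : ℕ} (X : Fin n → ℕ) (k : Fin n) :
    TG.pref X ((k : ℕ) + 1) = TG.pref X k + X k := by
  rw [TG.pref, TG.pref]
  have : ∀ t : Fin n, (if (t : ℕ) < (k : ℕ) + 1 then X t else 0) =
      (if (t : ℕ) < (k : ℕ) then X t else 0) + (if t = k then X t else 0) := by
    intro t
    rcases lt_trichotomy ((t : ℕ)) ((k : ℕ)) with h | h | h
    · have hne : t ≠ k := fun he => absurd (congrArg Fin.val he) (Nat.ne_of_lt h)
      simp [h, Nat.lt_succ_of_lt h, hne]
    · have : t = k := Fin.ext h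
      simp [this, h]
    · have h1 : ¬ ((t : ℕ) < (k : ℕ) + 1) := by omega
      have h2 : ¬ ((t : ℕ) < (k : ℕ)) := by omega
      have hne : t ≠ k := fun he => absurd (congrArg Fin.val he) (by omega)
      simp [h1, h2, hne]
  rw [Finset.sum_congr rfl fun t _ => this t, Finset.sum_add_distrib,
    Finset.sum_ite_eq' Finset.univ k X]
  simp

/-- The core induction: transfers realize any antitone majorized sequence. -/
lemma TG.reach {n₁ n₂ n₃ : ℕ} (D₂ : Fin n₂ → ℕ) (D₃ : Fin n₃ → ℕ) :
    ∀ (N : ℕ) (C T : Fin n₁ → ℕ), Antitone C → Antitone T →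
      (∀ k : ℕ, TG.pref T k ≤ TG.pref C k) → (∑ i, T i = ∑ i, C i) →
      (∑ i, (C i - T i) ≤ N) → TripartiteGraphic C D₂ D₃ → TripartiteGraphic T D₂ D₃ := by
  intro N
  induction N with
  | zero =>
    intro C T hC hT hmaj hsum hphi hg
    have hle : ∀ i, C i ≤ T i := by
      intro i
      have : C i - T i = 0 := Nat.eq_zero_of_le_zero
        (le_trans (Finset.single_le_sum (f := fun i => C i - T i)
          (fun i _ => Nat.zero_le _) (Finset.mem_univ i)) hphi)
      omega
    have : T = C := by
      funext i
      by_contra hne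
      have hlt : C i < T i := lt_of_le_of_ne (hle i) (fun h => hne h.symm)
      have : ∑ i, C i < ∑ i, T i :=
        Finset.sum_lt_sum (fun i _ => hle i) ⟨i, Finset.mem_univ i, hlt⟩
      omega
    rwa [this]
  | succ N ih =>
    intro C T hC hT hmaj hsum hphi hg
    by_cases heq : T = C
    · rwa [heq]
    -- find i₀ : minimal index where C ≠ T
    have hs : (Finset.univ.filter fun t : Fin n₁ => C t ≠ T t).Nonempty := by
      by_contra hc
      rw [Finset.not_nonempty_iff_eq_empty, Finset.filter_eq_empty_iff] at hc
      exact heq (funext fun t => by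
        have := hc (Finset.mem_univ t); push_neg at this; exact this.symm)
    obtain ⟨i₀, hi₀mem', hi₀min'⟩ := Finset.exists_min_image _ id hs
    have hi₀mem : C i₀ ≠ T i₀ := (Finset.mem_filter.1 hi₀mem').2
    have hi₀min : ∀ t : Fin n₁, t < i₀ → C t = T t := by
      intro t ht
      by_contra hc
      exact absurd (hi₀min' t (Finset.mem_filter.2 ⟨Finset.mem_univ t, hc⟩)) (not_le.2 ht)
    -- T i₀ < C i₀
    have hTi₀ : T i₀ < C i₀ := by
      have h1 : TG.pref T ((i₀ : ℕ) + 1) ≤ TG.pref C ((i₀ : ℕ) + 1) := hmaj _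
      rw [TG.pref_succ, TG.pref_succ] at h1
      have h2 : TG.pref T (i₀ : ℕ) = TG.pref C (i₀ : ℕ) := by
        unfold TG.pref
        refine Finset.sum_congr rfl fun t _ => ?_
        by_cases ht : (t : ℕ) < (i₀ : ℕ)
        · simp only [ht, if_true]
          exact (hi₀min t ht).symm
        · simp [ht]
      rcases lt_or_eq_of_le (not_lt.1 fun hlt : C i₀ < T i₀ => by omega) with h | h
      · exact h
      · exact absurd h.symm hi₀mem
    -- find j₀ : minimal index with C < T
    have hsj : (Finset.univ.filter fun t : Fin n₁ => C t < T t).Nonempty := by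
      by_contra hc
      rw [Finset.not_nonempty_iff_eq_empty, Finset.filter_eq_empty_iff] at hc
      have hge : ∀ t : Fin n₁, T t ≤ C t := fun t => by
        have := hc (Finset.mem_univ t); omega
      have : ∑ i, T i < ∑ i, C i :=
        Finset.sum_lt_sum (fun i _ => hge i) ⟨i₀, Finset.mem_univ i₀, hTi₀⟩
      omega
    obtain ⟨j₀, hj₀mem', hj₀min'⟩ := Finset.exists_min_image _ id hsj
    have hj₀mem : C j₀ < T j₀ := (Finset.mem_filter.1 hj₀mem').2
    have hj₀min : ∀ t : Fin n₁, t < j₀ → T t ≤ C t := by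
      intro t ht
      by_contra hc
      exact absurd (hj₀min' t (Finset.mem_filter.2 ⟨Finset.mem_univ t, not_le.1 hc⟩))
        (not_le.2 ht)
    have hij₀ : i₀ < j₀ := by
      rcases lt_trichotomy i₀ j₀ with h | h | h
      · exact h
      · exfalso; rw [h] at hTi₀; omega
      · exfalso; have := hi₀min j₀ h; omega
    -- i' : maximal index with C = C i₀ ; j'' : minimal index with C = C j₀
    have hsi' : (Finset.univ.filter fun t : Fin n₁ => C t = C i₀).Nonempty :=
      ⟨i₀, Finset.mem_filter.2 ⟨Finset.mem_univ _, rfl⟩⟩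
    obtain ⟨i', hi'mem', hi'max'⟩ := Finset.exists_max_image _ id hsi'
    have hi'val : C i' = C i₀ := (Finset.mem_filter.1 hi'mem').2
    have hi₀i' : i₀ ≤ i' := hi'max' i₀ (Finset.mem_filter.2 ⟨Finset.mem_univ _, rfl⟩)
    have hi'max : ∀ t : Fin n₁, i' < t → C t < C i₀ := by
      intro t ht
      have hle : C t ≤ C i' := hC (le_of_lt ht)
      rcases lt_or_eq_of_le hle with h | h
      · omega
      · exact absurd (hi'max' t (Finset.mem_filter.2
          ⟨Finset.mem_univ _, h.trans hi'val⟩)) (not_le.2 ht)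
    have hsj'' : (Finset.univ.filter fun t : Fin n₁ => C t = C j₀).Nonempty :=
      ⟨j₀, Finset.mem_filter.2 ⟨Finset.mem_univ _, rfl⟩⟩
    obtain ⟨j'', hj''mem', hj''min'⟩ := Finset.exists_min_image _ id hsj''
    have hj''val : C j'' = C j₀ := (Finset.mem_filter.1 hj''mem').2
    have hj''j₀ : j'' ≤ j₀ := hj''min' j₀ (Finset.mem_filter.2 ⟨Finset.mem_univ _, rfl⟩)
    have hj''min : ∀ t : Fin n₁, t < j'' → C j₀ < C t := by
      intro t ht
      have hle : C j'' ≤ C t := hC (le_of_lt ht)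
      rcases lt_or_eq_of_le hle with h | h
      · omega
      · exact absurd (hj''min' t (Finset.mem_filter.2
          ⟨Finset.mem_univ _, (h.symm.trans hj''val)⟩)) (not_le.2 ht)
    -- key value inequalities
    have hvv : C j₀ + 2 ≤ C i₀ := by
      have h1 : T j₀ ≤ T i₀ := hT (le_of_lt hij₀)
      omega
    have hii'jj'' : i' < j'' := by
      by_contra hc
      have := hC (not_lt.1 hc)  -- C i' ≤ C j''
      omega
    have hTi' : T i' < C i' := by
      have : T i' ≤ T i₀ := hT hi₀i'
      omega
    have hTj'' : C j'' < T j'' := by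
      have : T j₀ ≤ T j'' := hT hj''j₀
      omega
    -- the new sequence
    set C' : Fin n₁ → ℕ := fun x => if x = j'' then C j₀ + 1 else if x = i' then C i₀ - 1
      else C x with hC'
    have hne : i' ≠ j'' := ne_of_lt hii'jj''
    have hC'i' : C' i' = C i' - 1 := by simp [hC', hne, hi'val]
    have hC'j'' : C' j'' = C j'' + 1 := by simp [hC', hj''val]
    have hC'other : ∀ a, a ≠ i' → a ≠ j'' → C' a = C a := by
      intro a h1 h2; simp [hC', h1, h2]
    -- graphic for C'
    have hg' : TripartiteGraphic C' D₂ D₃ := by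
      refine TG.transfer hg i' j'' ?_ C' hC'i' hC'j'' hC'other
      rw [hi'val, hj''val]; omega
    -- C' is antitone
    have hC'anti : Antitone C' := by
      intro s t hst
      rcases eq_or_lt_of_le hst with rfl | hst
      · exact le_refl _
      have hs' : s ≠ j'' → s ≠ i' → C' s = C s := fun h1 h2 => by simp [hC', h1, h2]
      by_cases hsj : s = j''
      · have hjt : j'' < t := by rwa [hsj] at hst
        have ht1 : t ≠ j'' := ne_of_gt hjt
        have ht2 : t ≠ i' := ne_of_gt (lt_trans hii'jj'' hjt)
        rw [hsj, hC'j'', hC'other t ht2 ht1]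
        have : C t ≤ C j'' := hC (le_of_lt hjt)
        omega
      · by_cases hsi : s = i'
        · have hit : i' < t := by rwa [hsi] at hst
          by_cases htj : t = j''
          · rw [hsi, htj, hC'i', hC'j'', hi'val, hj''val]
            omega
          · have ht2 : t ≠ i' := ne_of_gt hit
            rw [hsi, hC'i', hC'other t ht2 htj]
            have h9 := hi'max t hit
            rw [hi'val]
            omega
        · rw [hs' hsj hsi]
          by_cases htj : t = j''
          · have hst' : s < j'' := by rwa [htj] at hst
            rw [htj, hC'j'']
            have h9 := hj''min s hst'
            rw [hj''val]
            omega
          · by_cases hti : t = i'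
            · rw [hti, hC'i']
              have : C i' ≤ C s := hC (le_of_lt (by rwa [hti] at hst))
              omega
            · rw [hC'other t hti htj]
              exact hC (le_of_lt hst)
    -- sums
    have hsum' : ∑ i, C' i = ∑ i, C i := by
      rw [← Finset.add_sum_erase _ C' (Finset.mem_univ i'),
        ← Finset.add_sum_erase _ C (Finset.mem_univ i'),
        ← Finset.add_sum_erase _ C' (Finset.mem_erase.2 ⟨hne.symm, Finset.mem_univ j''⟩),
        ← Finset.add_sum_erase _ C (Finset.mem_erase.2 ⟨hne.symm, Finset.mem_univ j''⟩)]
      have hrest : ∑ x ∈ (Finset.univ.erase i').erase j'', C' x =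
          ∑ x ∈ (Finset.univ.erase i').erase j'', C x := by
        refine Finset.sum_congr rfl fun x hx => ?_
        have hx1 := Finset.mem_erase.1 hx
        have hx2 := Finset.mem_erase.1 hx1.2
        exact hC'other x hx2.1 hx1.1
      rw [hrest, hC'i', hC'j'', hi'val, hj''val]
      omega
    have hsum'' : ∑ i, T i = ∑ i, C' i := by rw [hsum', hsum]
    -- majorization for C'
    have hmaj' : ∀ k : ℕ, TG.pref T k ≤ TG.pref C' k := by
      intro k
      have hsplit : ∀ X : Fin n₁ → ℕ, TG.pref X k =
          (if (i' : ℕ) < k then X i' else 0) + (if (j'' : ℕ) < k then X j'' else 0) +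
          ∑ x ∈ (Finset.univ.erase i').erase j'', (if (x : ℕ) < k then X x else 0) := by
        intro X
        rw [TG.pref, ← Finset.add_sum_erase _ _ (Finset.mem_univ i'),
          ← Finset.add_sum_erase _ _ (Finset.mem_erase.2 ⟨hne.symm, Finset.mem_univ j''⟩)]
        ring
      by_cases hk1 : (i' : ℕ) < k
      · by_cases hk2 : (j'' : ℕ) < k
        · -- both below k : pref C' k = pref C k
          have : TG.pref C' k = TG.pref C k := by
            rw [hsplit C', hsplit C]
            have hrest : ∀ x ∈ (Finset.univ.erase i').erase j'',
                (if (x : ℕ) < k then C' x else 0) = (if (x : ℕ) < k then C x else 0) := by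
              intro x hx
              have hx1 := Finset.mem_erase.1 hx
              have hx2 := Finset.mem_erase.1 hx1.2
              rw [hC'other x hx2.1 hx1.1]
            rw [Finset.sum_congr rfl hrest, hC'i', hC'j'', hi'val, hj''val,
              if_pos hk1, if_pos hk2, if_pos hk1, if_pos hk2]
            omega
          rw [this]; exact hmaj k
        · -- i' < k ≤ j'' : pref C' k = pref C k - 1, need strict majorization
          have hlt : TG.pref T k < TG.pref C k := by
            unfold TG.pref
            refine Finset.sum_lt_sum (fun t _ => ?_) ⟨i₀, Finset.mem_univ i₀, ?_⟩
            · by_cases ht : (t : ℕ) < k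
              · simp only [ht, if_true]
                refine hj₀min t ?_
                have : (t : ℕ) < (j'' : ℕ) := lt_of_lt_of_le ht (not_lt.1 hk2)
                have h2 : (j'' : ℕ) ≤ (j₀ : ℕ) := hj''j₀
                exact Fin.lt_def.2 (by omega)
              · simp [ht]
            · have hi₀k : (i₀ : ℕ) < k := lt_of_le_of_lt (Fin.le_def.1 hi₀i') hk1
              simp only [hi₀k, if_true]
              exact hTi₀
          have : TG.pref C k = TG.pref C' k + 1 := by
            rw [hsplit C', hsplit C]
            have hrest : ∀ x ∈ (Finset.univ.erase i').erase j'',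
                (if (x : ℕ) < k then C' x else 0) = (if (x : ℕ) < k then C x else 0) := by
              intro x hx
              have hx1 := Finset.mem_erase.1 hx
              have hx2 := Finset.mem_erase.1 hx1.2
              rw [hC'other x hx2.1 hx1.1]
            rw [Finset.sum_congr rfl hrest, hC'i', hC'j'', hi'val, hj''val,
              if_pos hk1, if_neg hk2, if_pos hk1, if_neg hk2]
            omega
          omega
      · -- k ≤ i' < j'' : nothing changes
        have hk2 : ¬ ((j'' : ℕ) < k) := by
          have := Fin.lt_def.1 hii'jj''
          omega
        have : TG.pref C' k = TG.pref C k := by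
          rw [hsplit C', hsplit C]
          have hrest : ∀ x ∈ (Finset.univ.erase i').erase j'',
              (if (x : ℕ) < k then C' x else 0) = (if (x : ℕ) < k then C x else 0) := by
            intro x hx
            have hx1 := Finset.mem_erase.1 hx
            have hx2 := Finset.mem_erase.1 hx1.2
            rw [hC'other x hx2.1 hx1.1]
          rw [Finset.sum_congr rfl hrest, if_neg hk1, if_neg hk2, if_neg hk1, if_neg hk2]
        rw [this]; exact hmaj k
    -- potential decreases
    have hphi' : ∑ i, (C' i - T i) ≤ N := by
      have hlt : ∑ i, (C' i - T i) < ∑ i, (C i - T i) := by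
        refine Finset.sum_lt_sum (fun t _ => ?_) ⟨i', Finset.mem_univ i', ?_⟩
        · by_cases ht1 : t = i'
          · subst ht1; rw [hC'i']; omega
          · by_cases ht2 : t = j''
            · subst ht2; rw [hC'j'']; omega
            · rw [hC'other t ht1 ht2]
        · rw [hC'i']
          omega
      omega
    exact ih C' T hC'anti hT hmaj' hsum'' hphi' hg'
lemma TG.main_step {n₁ n₂ n₃ : ℕ} (a dmax dmin dd : ℕ) (h1 : dmin ≤ dd) (h2 : dd ≤ dmax)
    {C : Fin n₁ → ℕ} {D₂ : Fin n₂ → ℕ} {D₃ : Fin n₃ → ℕ}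
    (hC : ∀ i : Fin n₁, C i = if (i : ℕ) < a then dmax else if (i : ℕ) = a then dd else dmin)
    (hg : TripartiteGraphic C D₂ D₃)
    (T : Fin n₁ → ℕ) (hb : ∀ i, dmin ≤ T i ∧ T i ≤ dmax)
    (hs : ∑ i, T i = ∑ i, C i) :
    TripartiteGraphic T D₂ D₃ := by
  set σ : Equiv.Perm (Fin n₁) := (Fin.revPerm.trans (Tuple.sort T)) with hσ
  set S : Fin n₁ → ℕ := T ∘ σ with hS
  have hmono := Tuple.monotone_sort T
  have hSanti : Antitone S := by
    intro x y hxy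
    have h : y.rev ≤ x.rev := Fin.rev_le_rev.2 hxy
    exact hmono h
  have hCanti : Antitone C := by
    intro x y hxy
    rw [hC x, hC y]
    have hxy' : (x : ℕ) ≤ (y : ℕ) := hxy
    split_ifs <;> omega
  have hsS : ∑ t, S t = ∑ t, T t := Equiv.sum_comp σ T
  have hmaj : ∀ k, TG.pref S k ≤ TG.pref C k := by
    intro k
    by_cases hk : k ≤ a
    · refine TG.pref_mono_arg k fun t ht => ?_
      rw [hC t, if_pos (lt_of_lt_of_le ht hk)]
      exact (hb (σ t)).2
    · have h3 := TG.pref_add_suff S k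
      have h4 := TG.pref_add_suff C k
      have hsuff : (∑ t : Fin n₁, if (t : ℕ) < k then 0 else C t) ≤
          (∑ t : Fin n₁, if (t : ℕ) < k then 0 else S t) := by
        refine Finset.sum_le_sum fun t _ => ?_
        by_cases ht : (t : ℕ) < k
        · simp [ht]
        · simp only [ht, if_false]
          rw [hC t, if_neg (by omega), if_neg (by omega)]
          exact (hb (σ t)).1
      omega
  have hgS : TripartiteGraphic S D₂ D₃ :=
    TG.reach D₂ D₃ (∑ i, (C i - S i)) C S hCanti hSanti hmaj (by rw [hsS, hs]) (le_refl _) hg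
  have hperm := TG.perm hgS σ.symm
  have hfun : S ∘ ⇑σ.symm = T := by
    funext x
    simp [hS, Function.comp]
  rwa [hfun] at hperm


theorem statement4 {n₁ n₂ n₃ : ℕ} (a₁ a₂ a₃ : ℕ)
    (d₁max d₁min d₁ d₂max d₂min d₂ d₃max d₃min d₃ : ℕ)
    (ha₁ : a₁ < n₁) (ha₂ : a₂ < n₂) (ha₃ : a₃ < n₃)
    (hd₁ : d₁min ≤ d₁ ∧ d₁ ≤ d₁max) (hd₂ : d₂min ≤ d₂ ∧ d₂ ≤ d₂max)
    (hd₃ : d₃min ≤ d₃ ∧ d₃ ≤ d₃max)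
    (D₁ : Fin n₁ → ℕ) (D₂ : Fin n₂ → ℕ) (D₃ : Fin n₃ → ℕ)
    (hD₁ : ∀ i : Fin n₁,
      D₁ i = if (i : ℕ) < a₁ then d₁max else if (i : ℕ) = a₁ then d₁ else d₁min)
    (hD₂ : ∀ i : Fin n₂,
      D₂ i = if (i : ℕ) < a₂ then d₂max else if (i : ℕ) = a₂ then d₂ else d₂min)
    (hD₃ : ∀ i : Fin n₃,
      D₃ i = if (i : ℕ) < a₃ then d₃max else if (i : ℕ) = a₃ then d₃ else d₃min)
    (hgraphic : TripartiteGraphic D₁ D₂ D₃)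
    (D₁' : Fin n₁ → ℕ) (D₂' : Fin n₂ → ℕ) (D₃' : Fin n₃ → ℕ)
    (hb₁ : ∀ i, d₁min ≤ D₁' i ∧ D₁' i ≤ d₁max)
    (hb₂ : ∀ i, d₂min ≤ D₂' i ∧ D₂' i ≤ d₂max)
    (hb₃ : ∀ i, d₃min ≤ D₃' i ∧ D₃' i ≤ d₃max)
    (hs₁ : ∑ i, D₁' i = ∑ i, D₁ i)
    (hs₂ : ∑ i, D₂' i = ∑ i, D₂ i)
    (hs₃ : ∑ i, D₃' i = ∑ i, D₃ i) :
    TripartiteGraphic D₁' D₂' D₃' := by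
  have g1 : TripartiteGraphic D₁' D₂ D₃ :=
    TG.main_step a₁ d₁max d₁min d₁ hd₁.1 hd₁.2 hD₁ hgraphic D₁' hb₁ hs₁
  have g2 := TG.cycle g1
  have g3 : TripartiteGraphic D₂' D₃ D₁' :=
    TG.main_step a₂ d₂max d₂min d₂ hd₂.1 hd₂.2 hD₂ g2 D₂' hb₂ hs₂
  have g4 := TG.cycle g3
  have g5 : TripartiteGraphic D₃' D₁' D₂' :=
    TG.main_step a₃ d₃max d₃min d₃ hd₃.1 hd₃.2 hD₃ g4 D₃' hb₃ hs₃
  exact TG.cycle g5
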